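/- (DSIC analogue, Lemma B.2 IC part.) Let μ be a (2mε)-DSIC mechanism on rounded types [0,H]_ε^{n·m} with 1-Lipschitz valuations, and define μ^ε(v) = μ(⌊v⌋_ε) on [0,H]^{n·m}. Then μ^ε is (4mε)-DSIC: for every bidder k, every profile v, and every deviation v'_k, E[u_k(v_k, μ^ε(v_k, v_{-k}))] ≥ E[u_k(v_k, μ^ε(v'_k, v_{-k}))] − 4mε. -/

import Mathlib

/-- DSIC analogue of Lemma B.2 (IC part).  Let μ = (alloc, pay) be (2mε)-DSIC on rounded
profiles (multiples of ε in [0,H]) with 1-Lipschitz valuations, and define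
μ^ε(v) := μ(⌊v⌋_ε), where ⌊v⌋_ε rounds every coordinate down to a multiple of ε.  Then μ^ε is
(4mε)-DSIC on [0,H]^{n·m}: truthful reporting loses at most 4mε versus any deviation. -/
theorem stmt_15 {X : Type*} (n m : ℕ) (ε H : ℝ) (hε : 0 < ε) (hH : 0 ≤ H)
    (val : Fin n → (Fin m → ℝ) → X → ℝ)
    (hLip : ∀ (k : Fin n) (u u' : Fin m → ℝ) (x : X),
      (∀ j, |u j - u' j| ≤ ε) → |val k u x - val k u' x| ≤ m * ε)
    (alloc : (Fin n → Fin m → ℝ) → X) (pay : (Fin n → Fin m → ℝ) → Fin n → ℝ)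
    (hDSIC : ∀ (w : Fin n → Fin m → ℝ),
      (∀ i j, (∃ a : ℕ, w i j = a * ε) ∧ w i j ≤ H) →
      ∀ (k : Fin n) (wk' : Fin m → ℝ), (∀ j, (∃ a : ℕ, wk' j = a * ε) ∧ wk' j ≤ H) →
        val k (w k) (alloc w) - pay w k ≥
          val k (w k) (alloc (Function.update w k wk'))
            - pay (Function.update w k wk') k - 2 * m * ε) :
    ∀ (v : Fin n → Fin m → ℝ), (∀ i j, 0 ≤ v i j ∧ v i j ≤ H) →
    ∀ (k : Fin n) (vk' : Fin m → ℝ), (∀ j, 0 ≤ vk' j ∧ vk' j ≤ H) →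
      val k (v k) (alloc (fun i j => ε * (⌊v i j / ε⌋ : ℝ)))
          - pay (fun i j => ε * (⌊v i j / ε⌋ : ℝ)) k ≥
        val k (v k)
            (alloc (fun i j => ε * (⌊Function.update v k vk' i j / ε⌋ : ℝ)))
          - pay (fun i j => ε * (⌊Function.update v k vk' i j / ε⌋ : ℝ)) k
          - 4 * m * ε := by
  intro v hv k vk' hvk'
  set r : ℝ → ℝ := fun t => ε * (⌊t / ε⌋ : ℝ) with hr
  -- basic rounding facts
  have hround : ∀ t : ℝ, 0 ≤ t → t ≤ H →
      ((∃ a : ℕ, r t = a * ε) ∧ r t ≤ H) ∧ |t - r t| ≤ ε := by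
    intro t ht htH
    have hfl : (⌊t / ε⌋ : ℝ) ≤ t / ε := Int.floor_le _
    have hle : r t ≤ t := by
      have := mul_le_mul_of_nonneg_left hfl (le_of_lt hε)
      simpa [hr, mul_div_cancel₀, ne_of_gt hε] using this
    have hfl0 : (0 : ℤ) ≤ ⌊t / ε⌋ := Int.floor_nonneg.2 (div_nonneg ht hε.le)
    have hgt : t - ε < r t := by
      have h1 : t / ε < ⌊t / ε⌋ + 1 := Int.lt_floor_add_one _
      have := (div_lt_iff₀ hε).1 h1
      have : t < ε * ⌊t / ε⌋ + ε := by nlinarith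
      simp only [hr]; linarith
    refine ⟨⟨⟨⌊t / ε⌋.toNat, ?_⟩, le_trans hle htH⟩, ?_⟩
    · have : ((⌊t / ε⌋.toNat : ℤ) : ℝ) = (⌊t / ε⌋ : ℝ) := by
        exact_mod_cast congrArg (fun z : ℤ => (z : ℝ)) (Int.toNat_of_nonneg hfl0)
      push_cast at this ⊢
      rw [this]; ring
    · rw [abs_le]; constructor <;> linarith
  have hw : ∀ i j, (∃ a : ℕ, r (v i j) = a * ε) ∧ r (v i j) ≤ H :=
    fun i j => ((hround (v i j) (hv i j).1 (hv i j).2).1)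
  have hwk' : ∀ j, (∃ a : ℕ, r (vk' j) = a * ε) ∧ r (vk' j) ≤ H :=
    fun j => ((hround (vk' j) (hvk' j).1 (hvk' j).2).1)
  have key := hDSIC (fun i j => r (v i j)) hw k (fun j => r (vk' j)) hwk'
  -- identify the updated rounded profile
  have hupd : (fun i j => r (Function.update v k vk' i j))
      = Function.update (fun i j => r (v i j)) k (fun j => r (vk' j)) := by
    funext i j
    by_cases h : i = k
    · subst h; simp [Function.update_self]
    · simp [Function.update_of_ne h]
  -- Lipschitz comparisons
  have hclose : ∀ j, |v k j - r (v k j)| ≤ ε :=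
    fun j => (hround (v k j) (hv k j).1 (hv k j).2).2
  have h1 := hLip k (v k) (fun j => r (v k j)) (alloc (fun i j => r (v i j))) hclose
  have h2 := hLip k (v k) (fun j => r (v k j))
      (alloc (Function.update (fun i j => r (v i j)) k (fun j => r (vk' j)))) hclose
  have h1' := abs_le.1 h1
  have h2' := abs_le.1 h2
  have hm : (0:ℝ) ≤ m * ε := by positivity
  rw [hupd]
  linarith [key, h1'.1, h1'.2, h2'.1, h2'.2]
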